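/- Let R be an extended regular expression over an alphabet Σ and let Q be a string over Σ of length n. Then Q ∈ L(R) if and only if M(R)(0, n) holds, i.e., the algorithm correctly reports a match exactly when the edge (g_0, g_n) is present in the match graph of the root of the parse tree. -/

import Mathlib

open Computability

/-- Extended regular expressions over alphabet `α`. -/
inductive ERE (α : Type) : Type
  | eps : ERE α
  | char : α → ERE α
  | concat : ERE α → ERE α → ERE α
  | union : ERE α → ERE α → ERE α
  | inter : ERE α → ERE α → ERE α
  | compl : ERE α → ERE α
  | star : ERE α → ERE α

/-- The language generated by an extended regular expression. -/
def ERE.lang {α : Type} : ERE α → Language α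
  | .eps => 1
  | .char a => {[a]}
  | .concat S T => S.lang * T.lang
  | .union S T => S.lang + T.lang
  | .inter S T => S.lang ⊓ T.lang
  | .compl S => (Set.univ : Set (List α)) \ S.lang
  | .star S => S.lang∗

/-- The substring `Q[i..j)`. -/
def substr {α : Type} (Q : List α) (i j : ℕ) : List α := (Q.drop i).take (j - i)

/-- The match relation `M(R)(i,j)` of the Hopcroft–Ullman dynamic programming algorithm. -/
def ERE.M {α : Type} (Q : List α) : ERE α → ℕ → ℕ → Prop
  | .eps, i, j => i = j ∧ j ≤ Q.length
  | .char a, i, j => j = i + 1 ∧ j ≤ Q.length ∧ Q[i]? = some a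
  | .concat S T, i, j => ∃ l, S.M Q i l ∧ T.M Q l j
  | .union S T, i, j => S.M Q i j ∨ T.M Q i j
  | .inter S T, i, j => S.M Q i j ∧ T.M Q i j
  | .compl S, i, j => i ≤ j ∧ j ≤ Q.length ∧ ¬ S.M Q i j
  | .star S, i, j => i ≤ j ∧ j ≤ Q.length ∧ Relation.ReflTransGen (S.M Q) i j

lemma substr_length {α : Type} (Q : List α) {i j : ℕ} (h : j ≤ Q.length) :
    (substr Q i j).length = j - i := by
  simp [substr]; omega

lemma substr_append {α : Type} (Q : List α) {i l j : ℕ} (h1 : i ≤ l) (h2 : l ≤ j) :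
    substr Q i j = substr Q i l ++ substr Q l j := by
  simp only [substr]
  have hji : j - i = (l - i) + (j - l) := by omega
  rw [hji, List.take_add, List.drop_drop]
  have h' : i + (l - i) = l := by omega
  rw [h']

lemma substr_single {α : Type} (Q : List α) {i : ℕ} (hi : i < Q.length) :
    substr Q i (i + 1) = [Q[i]] := by
  simp only [substr]
  rw [List.drop_eq_getElem_cons hi]
  have h1 : i + 1 - i = 1 := by omega
  rw [h1]
  rfl

lemma ERE.M_iff {α : Type} (R : ERE α) (Q : List α) :
    ∀ i j, R.M Q i j ↔ i ≤ j ∧ j ≤ Q.length ∧ substr Q i j ∈ R.lang := by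
  induction R with
  | eps =>
    intro i j
    simp only [ERE.M, ERE.lang, Language.mem_one]
    constructor
    · rintro ⟨rfl, h⟩
      exact ⟨le_rfl, h, by simp [substr]⟩
    · rintro ⟨h1, h2, h3⟩
      have := substr_length Q (i := i) h2
      rw [h3] at this
      simp at this
      exact ⟨by omega, h2⟩
  | char a =>
    intro i j
    simp only [ERE.M, ERE.lang, Set.mem_singleton_iff]
    constructor
    · rintro ⟨rfl, h2, h3⟩
      have hi : i < Q.length := by omega
      refine ⟨by omega, h2, ?_⟩
      rw [substr_single Q hi]
      rw [List.getElem?_eq_getElem hi, Option.some.injEq] at h3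
      show ([Q[i]] : List α) = [a]
      rw [h3]
    · rintro ⟨h1, h2, h3⟩
      have hl := substr_length Q (i := i) h2
      rw [h3] at hl
      simp at hl
      have hj : j = i + 1 := by omega
      subst hj
      have hi : i < Q.length := by omega
      refine ⟨rfl, h2, ?_⟩
      rw [List.getElem?_eq_getElem hi]
      rw [substr_single Q hi] at h3
      have h4 : ([Q[i]] : List α) = [a] := h3
      simp only [List.cons.injEq, and_true] at h4
      rw [h4]
  | concat S T ihS ihT =>
    intro i j
    simp only [ERE.M, ERE.lang, Language.mem_mul]
    constructor
    · rintro ⟨l, hS, hT⟩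
      rw [ihS] at hS; rw [ihT] at hT
      obtain ⟨h1, h2, h3⟩ := hS
      obtain ⟨h4, h5, h6⟩ := hT
      exact ⟨by omega, h5, _, h3, _, h6, (substr_append Q h1 h4).symm⟩
    · rintro ⟨h1, h2, u, hu, v, hv, heq⟩
      refine ⟨i + u.length, ?_, ?_⟩
      · rw [ihS]
        have hlen : u.length + v.length = j - i := by
          have := substr_length Q (i := i) h2
          rw [← heq] at this; simpa using this
        have hij : i + u.length ≤ j := by omega
        have := substr_append Q (i := i) (l := i + u.length) (j := j)
          (by omega) hij
        rw [← heq] at this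
        have hl2 : (substr Q i (i + u.length)).length = u.length := by
          rw [substr_length Q (by omega)]; omega
        obtain ⟨e1, e2⟩ := List.append_inj this hl2.symm
        exact ⟨by omega, by omega, by rw [← e1]; exact hu⟩
      · rw [ihT]
        have hlen : u.length + v.length = j - i := by
          have := substr_length Q (i := i) h2
          rw [← heq] at this; simpa using this
        have hij : i + u.length ≤ j := by omega
        have := substr_append Q (i := i) (l := i + u.length) (j := j)
          (by omega) hij
        rw [← heq] at this
        have hl2 : (substr Q i (i + u.length)).length = u.length := by
          rw [substr_length Q (by omega)]; omega
        obtain ⟨e1, e2⟩ := List.append_inj this hl2.symm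
        exact ⟨hij, h2, by rw [← e2]; exact hv⟩
  | union S T ihS ihT =>
    intro i j
    simp only [ERE.M, ERE.lang, Language.mem_add, ihS, ihT]
    tauto
  | inter S T ihS ihT =>
    intro i j
    constructor
    · rintro ⟨hS, hT⟩
      rw [ihS] at hS; rw [ihT] at hT
      exact ⟨hS.1, hS.2.1, hS.2.2, hT.2.2⟩
    · rintro ⟨h1, h2, h3, h4⟩
      exact ⟨(ihS _ _).mpr ⟨h1, h2, h3⟩, (ihT _ _).mpr ⟨h1, h2, h4⟩⟩
  | compl S ihS =>
    intro i j
    constructor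
    · rintro ⟨h1, h2, h3⟩
      exact ⟨h1, h2, Set.mem_univ _, fun hm => h3 ((ihS _ _).mpr ⟨h1, h2, hm⟩)⟩
    · rintro ⟨h1, h2, h4⟩
      exact ⟨h1, h2, fun hm => h4.2 ((ihS _ _).mp hm).2.2⟩
  | star S ihS =>
    intro i j
    simp only [ERE.M, ERE.lang]
    constructor
    · rintro ⟨h1, h2, h3⟩
      refine ⟨h1, h2, ?_⟩
      clear h1
      induction h3 with
      | refl => simp [substr, Language.nil_mem_kstar]
      | @tail b c hab hbc ih =>
        rw [ihS] at hbc
        obtain ⟨hb1, hb2, hb3⟩ := hbc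
        have hib : i ≤ b := by
          clear ih hb1 hb2 hb3 h2
          induction hab with
          | refl => exact le_rfl
          | tail h' h'' ih' =>
            have := (ihS _ _).mp h''
            omega
        have hmem := ih (by omega)
        rw [substr_append Q hib hb1]
        rw [Language.mem_kstar] at hmem ⊢
        obtain ⟨L, hL1, hL2⟩ := hmem
        refine ⟨L ++ [substr Q b c], by simp [hL1], ?_⟩
        intro y hy
        simp at hy
        rcases hy with hy | hy
        · exact hL2 y hy
        · rw [hy]; exact hb3
    · rintro ⟨h1, h2, h3⟩
      refine ⟨h1, h2, ?_⟩
      rw [Language.mem_kstar] at h3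
      obtain ⟨L, hL1, hL2⟩ := h3
      have main : ∀ (L : List (List α)) (i : ℕ), (∀ y ∈ L, y ∈ S.lang) → i ≤ j →
          substr Q i j = L.flatten → Relation.ReflTransGen (S.M Q) i j := by
        intro L
        induction L with
        | nil =>
          intro i _ hij hflat
          have hlen := substr_length Q (i := i) h2
          rw [hflat] at hlen
          simp at hlen
          have : i = j := by omega
          rw [this]
        | cons y L ih =>
          intro i hmem hij hflat
          simp only [List.flatten_cons] at hflat
          have hlen := substr_length Q (i := i) h2
          rw [hflat] at hlen
          simp at hlen
          have hil : i + y.length ≤ j := by omega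
          have hsplit := substr_append Q (i := i) (l := i + y.length) (j := j)
            (by omega) hil
          rw [hflat] at hsplit
          have hl2 : (substr Q i (i + y.length)).length = y.length := by
            rw [substr_length Q (by omega)]; omega
          obtain ⟨e1, e2⟩ := List.append_inj hsplit hl2.symm
          refine Relation.ReflTransGen.head ((ihS _ _).mpr ⟨by omega, by omega, ?_⟩)
            (ih _ (fun z hz => hmem z (by simp [hz])) hil e2.symm)
          rw [← e1]
          exact hmem y (by simp)
      exact main L i hL2 h1 hL1

/-- The algorithm correctly reports a match: `Q ∈ L(R)` iff the edge `(g_0, g_n)` is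
present in the match graph of the root of the parse tree, i.e. iff `M(R)(0, n)` holds. -/
theorem dynamicProgramming_report {α : Type} (R : ERE α) (Q : List α) (n : ℕ)
    (hn : n = Q.length) :
    Q ∈ R.lang ↔ R.M Q 0 n := by
  rw [ERE.M_iff]
  have : substr Q 0 n = Q := by simp [substr, hn]
  rw [this]
  exact ⟨fun h => ⟨Nat.zero_le _, le_of_eq hn, h⟩, fun h => h.2.2⟩
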